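/- Under the same hypotheses as the previous statement, the relations z₁z₂ + z₃z₁ + z₂z₃ = 0 and z₂z₁ + z₁z₃ + z₃z₂ = 0 hold in A. -/
import Mathlib


/-- `z_h = x_h x₄ − q₁ x₄ x_h` (here `y` plays the role of `x₄` and the first
three generators are indexed by `ZMod 3`, with `x₃ = x 0`, so that `x 3 = x₃`). -/
def zz {k : Type*} [Field k] {A : Type*} [Ring A] [Algebra k A]
    (q1 : k) (x : ZMod 3 → A) (y : A) (h : ZMod 3) : A :=
  x h * y - q1 • (y * x h)

/-- `u_{ij} = (ad_c x_i) z_j = x_i z_j + q₁ z_{2i−j} x_i`. -/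
def uu {k : Type*} [Field k] {A : Type*} [Ring A] [Algebra k A]
    (q1 : k) (x : ZMod 3 → A) (y : A) (i j : ZMod 3) : A :=
  x i * zz q1 x y j + q1 • (zz q1 x y (2 * i - j) * x i)

section helpers
variable {k : Type*} [Field k] {A : Type*} [Ring A] [Algebra k A]

lemma E_lemma (ω q1 q2 : k) (hq : q1 * q2 = -ω) (x : ZMod 3 → A) (y : A)
    (hz : ∀ h : ZMod 3, y * zz q1 x y h = q2 • (zz q1 x y h * y)) (j : ZMod 3) :
    (1 - ω) • (y * (x j * y)) = q2 • (x j * (y * y)) + q1 • (y * (y * x j)) := by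
  have hq' : q2 * q1 = -ω := by rw [mul_comm]; exact hq
  have h1 := hz j
  simp only [zz, mul_sub, sub_mul, smul_mul_assoc, mul_smul_comm, smul_smul, smul_sub,
    mul_assoc, hq'] at h1
  linear_combination (norm := module) h1

lemma key_lemma (ω q1 q2 : k) (hq : q1 * q2 = -ω) (x : ZMod 3 → A) (y : A)
    (hz : ∀ h : ZMod 3, y * zz q1 x y h = q2 • (zz q1 x y h * y)) (h j : ZMod 3) :
    (1 - ω) • (zz q1 x y h * zz q1 x y j)
      = q2 • (x h * (x j * (y * y))) - (q1 * (1 - ω)) • (y * (x h * (x j * y)))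
        + (q1 ^ 3) • (y * (y * (x h * x j))) := by
  have E1 : (1 - ω) • (x h * (y * (x j * y)))
      = q2 • (x h * (x j * (y * y))) + q1 • (x h * (y * (y * x j))) := by
    have := congrArg (fun t => x h * t) (E_lemma ω q1 q2 hq x y hz j)
    simpa [mul_smul_comm, mul_add, mul_assoc] using this
  have E2 : (1 - ω) • (y * (x h * (y * x j)))
      = q2 • (x h * (y * (y * x j))) + q1 • (y * (y * (x h * x j))) := by
    have := congrArg (fun t => t * x j) (E_lemma ω q1 q2 hq x y hz h)
    simpa [smul_mul_assoc, add_mul, mul_assoc] using this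
  have hc : (1 - ω) * q1 = q1 + q1 * q1 * q2 := by linear_combination -q1 * hq
  simp only [zz, mul_sub, sub_mul, smul_mul_assoc, mul_smul_comm, smul_smul, smul_sub,
    mul_assoc]
  linear_combination (norm := module) E1 + (q1 * q1) • E2 - (hc : _) • (x h * (y * (y * x j)))

lemma triple_lemma (ω q1 q2 : k) (hne : (1 : k) - ω ≠ 0) (hq : q1 * q2 = -ω)
    (x : ZMod 3 → A) (y : A)
    (hz : ∀ h : ZMod 3, y * zz q1 x y h = q2 • (zz q1 x y h * y))
    (a b c d e f : ZMod 3)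
    (hs : x a * x b + x c * x d + x e * x f = 0) :
    zz q1 x y a * zz q1 x y b + zz q1 x y c * zz q1 x y d
      + zz q1 x y e * zz q1 x y f = 0 := by
  have C1 : x a * (x b * (y * y)) + x c * (x d * (y * y)) + x e * (x f * (y * y)) = 0 := by
    have := congrArg (fun t => t * (y * y)) hs
    simpa [add_mul, mul_assoc] using this
  have C2 : y * (x a * (x b * y)) + y * (x c * (x d * y)) + y * (x e * (x f * y)) = 0 := by
    have := congrArg (fun t => y * (t * y)) hs
    simpa [mul_add, add_mul, mul_assoc] using this
  have C3 : y * (y * (x a * x b)) + y * (y * (x c * x d)) + y * (y * (x e * x f)) = 0 := by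
    have := congrArg (fun t => y * (y * t)) hs
    simpa [mul_add] using this
  have H : (1 - ω) • (zz q1 x y a * zz q1 x y b + zz q1 x y c * zz q1 x y d
      + zz q1 x y e * zz q1 x y f) = 0 := by
    rw [smul_add, smul_add, key_lemma ω q1 q2 hq x y hz a b,
      key_lemma ω q1 q2 hq x y hz c d, key_lemma ω q1 q2 hq x y hz e f]
    linear_combination (norm := module) q2 • C1 - (q1 * (1 - ω)) • C2 + (q1 ^ 3) • C3
  have := congrArg (fun t => (1 - ω)⁻¹ • t) H
  simpa [smul_smul, inv_mul_cancel₀ hne] using this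

end helpers

/-- under the same hypotheses as Statement 10, the relations
`z₁z₂ + z₃z₁ + z₂z₃ = 0` and `z₂z₁ + z₁z₃ + z₃z₂ = 0` hold in `A`. -/
theorem z_sum_relations {k : Type*} [Field k] [CharZero k]
    (ω q1 q2 : k) (hω : ω ^ 3 = 1) (hω1 : ω ≠ 1) (hq : q1 * q2 = -ω)
    {A : Type*} [Ring A] [Algebra k A] (x : ZMod 3 → A) (y : A)
    (hx2 : ∀ i : ZMod 3, x i ^ 2 = 0)
    (hs1 : x 1 * x 2 + x 3 * x 1 + x 2 * x 3 = 0)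
    (hs2 : x 2 * x 1 + x 1 * x 3 + x 3 * x 2 = 0)
    (hu2 : uu q1 x y 2 1 = ω • uu q1 x y 1 3)
    (hu3 : uu q1 x y 3 1 = ω • uu q1 x y 1 2)
    (hz : ∀ h : ZMod 3, y * zz q1 x y h = q2 • (zz q1 x y h * y)) :
    zz q1 x y 1 * zz q1 x y 2 + zz q1 x y 3 * zz q1 x y 1
        + zz q1 x y 2 * zz q1 x y 3 = 0 ∧
    zz q1 x y 2 * zz q1 x y 1 + zz q1 x y 1 * zz q1 x y 3
        + zz q1 x y 3 * zz q1 x y 2 = 0 := by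
  have hne : (1 : k) - ω ≠ 0 := sub_ne_zero.mpr (Ne.symm hω1)
  exact ⟨triple_lemma ω q1 q2 hne hq x y hz 1 2 3 1 2 3 hs1,
    triple_lemma ω q1 q2 hne hq x y hz 2 1 1 3 3 2 hs2⟩
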